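/- Let n ≥ 2 and let G be a directed simple graph on Fin n with distinguished vertex 0. Let A ∈ Θ_G be such that the characteristic polynomial of A has n pairwise distinct complex roots and the characteristic polynomial of A₁ := A.submatrix Fin.succ Fin.succ has n−1 pairwise distinct complex roots. Then for every C ∈ Θ_G the following are equivalent: (a) for every k < n, deriv (fun t : ℂ => ((A + t • C).charpoly).coeff k) 0 = 0, and for every k < n−1, deriv (fun t : ℂ => (((A + t • C).submatrix Fin.succ Fin.succ).charpoly).coeff k) 0 = 0; (b) there exists X : Matrix (Fin n) (Fin n) ℂ with X*A − A*X = C, and there exists Y : Matrix (Fin (n−1)) (Fin (n−1)) ℂ with Y*A₁ − A₁*Y = C.submatrix Fin.succ Fin.succ. -/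

import Mathlib

open Matrix Polynomial

variable {V : Type*}

/-- The parameter space `Θ_G` of a directed simple graph given by the edge
relation `E` (where `E j i` means there is an edge `j → i`): matrices whose
off-diagonal entry `(i,j)` vanishes unless `j → i` is an edge. -/
def Theta (E : V → V → Prop) : Set (Matrix V V ℂ) :=
  {A | ∀ i j, i ≠ j → ¬ E j i → A i j = 0}

/-- The embedding `Fin (n-1) → Fin n` skipping `0` (deleting row/column `0`). -/
def finEmb (n : ℕ) (i : Fin (n - 1)) : Fin n :=
  ⟨i.1 + 1, by have := i.isLt; omega⟩

section Aux
variable {S : Type*} [CommRing S] {ι : Type*} [DecidableEq ι]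

lemma prod_coeff_one (s : Finset ι) (f g : ι → S) :
    (∏ i ∈ s, (Polynomial.C (f i) + X * Polynomial.C (g i))).coeff 1
      = ∑ i ∈ s, g i * ∏ j ∈ s.erase i, f j := by
  classical
  induction s using Finset.induction_on with
  | empty => simp [Polynomial.coeff_one]
  | @insert a s ha ih =>
    rw [Finset.prod_insert ha, Finset.sum_insert ha]
    have h0 : ∀ (u : Finset ι), (∏ i ∈ u, (Polynomial.C (f i) + X * Polynomial.C (g i))).coeff 0
        = ∏ i ∈ u, f i := by
      intro u
      rw [Polynomial.coeff_zero_eq_eval_zero]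
      simp [Polynomial.eval_prod]
    rw [add_mul, Polynomial.coeff_add, Polynomial.coeff_C_mul, mul_assoc, Polynomial.coeff_X_mul,
      Polynomial.coeff_C_mul, ih, h0, Finset.erase_insert ha]
    rw [Finset.mul_sum]
    have : ∀ i ∈ s, f a * (g i * ∏ j ∈ s.erase i, f j)
        = g i * ∏ j ∈ (insert a s).erase i, f j := by
      intro i hi
      have hia : i ≠ a := by rintro rfl; exact ha hi
      rw [Finset.erase_insert_of_ne hia.symm, Finset.prod_insert (by simp [ha])]
      ring
    rw [Finset.sum_congr rfl this]
    ring
end Aux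

section Det
variable {S : Type*} [CommRing S] {m : ℕ}

lemma det_coeff_one (M N : Matrix (Fin m) (Fin m) S) :
    ((Matrix.of fun i j => Polynomial.C (M i j) + X * Polynomial.C (N i j)).det).coeff 1
      = (Matrix.adjugate M * N).trace := by
  classical
  rw [Matrix.det_apply]
  simp only [Units.smul_def]
  rw [Polynomial.finset_sum_coeff]
  have key : ∀ σ : Equiv.Perm (Fin m),
      ((Equiv.Perm.sign σ : ℤ) • ∏ i, (Matrix.of fun i j =>
          Polynomial.C (M i j) + X * Polynomial.C (N i j)) (σ i) i).coeff 1
        = ∑ i, (Equiv.Perm.sign σ : ℤ) • (N (σ i) i * ∏ j ∈ Finset.univ.erase i, M (σ j) j) := by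
    intro σ
    rw [Polynomial.coeff_smul]
    have := prod_coeff_one (Finset.univ : Finset (Fin m)) (fun i => M (σ i) i)
      (fun i => N (σ i) i)
    simp only [Matrix.of_apply]
    rw [this, Finset.smul_sum]
  rw [Finset.sum_congr rfl fun σ _ => key σ, Finset.sum_comm]
  have col : ∀ i : Fin m,
      (∑ σ : Equiv.Perm (Fin m), (Equiv.Perm.sign σ : ℤ) •
        (N (σ i) i * ∏ j ∈ Finset.univ.erase i, M (σ j) j))
        = (M.updateCol i fun r => N r i).det := by
    intro i
    rw [Matrix.det_apply]
    simp only [Units.smul_def]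
    refine Finset.sum_congr rfl fun σ _ => ?_
    congr 1
    rw [← Finset.mul_prod_erase Finset.univ _ (Finset.mem_univ i)]
    rw [Matrix.updateCol_apply]
    simp only [if_pos rfl]
    congr 1
    refine Finset.prod_congr rfl fun j hj => ?_
    rw [Matrix.updateCol_apply, if_neg (Finset.ne_of_mem_erase hj)]
  rw [Finset.sum_congr rfl fun i _ => col i]
  rw [Matrix.trace]
  refine Finset.sum_congr rfl fun i _ => ?_
  rw [← Matrix.cramer_apply, Matrix.cramer_eq_adjugate_mulVec]
  simp [Matrix.mulVec, Matrix.mul_apply, Matrix.diag, dotProduct]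
end Det

section Main
variable {m : ℕ}

noncomputable def Dpoly (A B : Matrix (Fin m) (Fin m) ℂ) : Polynomial (Polynomial ℂ) :=
  (Matrix.of fun i j => Polynomial.C ((charmatrix A) i j)
    + X * Polynomial.C ((-(B.map Polynomial.C)) i j)).det

lemma charpoly_add_smul (A B : Matrix (Fin m) (Fin m) ℂ) (t : ℂ) :
    (A + t • B).charpoly = (Dpoly A B).eval (Polynomial.C t) := by
  rw [Matrix.charpoly, Dpoly, ← Polynomial.coe_evalRingHom, RingHom.map_det]
  congr 1
  ext i j
  simp only [RingHom.mapMatrix_apply, Matrix.map_apply, Matrix.of_apply, RingHom.coe_coe,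
    Polynomial.coe_evalRingHom, Polynomial.eval_add, Polynomial.eval_C, Polynomial.eval_mul,
    Polynomial.eval_X, Matrix.neg_apply]
  by_cases h : i = j
  · subst h
    simp only [charmatrix_apply_eq, Matrix.add_apply, Matrix.smul_apply, smul_eq_mul, map_add,
      _root_.map_mul]
    ring
  · simp only [charmatrix_apply_ne _ _ _ h, Matrix.add_apply, Matrix.smul_apply, smul_eq_mul,
      map_add, _root_.map_mul]
    ring

lemma deriv_coeff (A B : Matrix (Fin m) (Fin m) ℂ) (k : ℕ) :
    deriv (fun t : ℂ => ((A + t • B).charpoly).coeff k) 0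
      = -((Matrix.adjugate (charmatrix A) * (B.map Polynomial.C)).trace).coeff k := by
  have hD1 : (Dpoly A B).coeff 1
      = -((Matrix.adjugate (charmatrix A)) * (B.map Polynomial.C)).trace := by
    rw [Dpoly, det_coeff_one, Matrix.mul_neg, Matrix.trace_neg]
  set D := Dpoly A B with hD
  set Nb := D.natDegree + 2 with hNb
  set q : Polynomial ℂ := ∑ j ∈ Finset.range Nb, Polynomial.C ((D.coeff j).coeff k) * X ^ j
    with hq
  have hfun : (fun t : ℂ => ((A + t • B).charpoly).coeff k) = fun t => q.eval t := by
    funext t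
    rw [charpoly_add_smul, ← hD]
    rw [Polynomial.eval_eq_sum_range' (show D.natDegree < Nb by omega)]
    rw [Polynomial.finset_sum_coeff, hq, Polynomial.eval_finset_sum]
    refine Finset.sum_congr rfl fun j _ => ?_
    rw [← Polynomial.C_pow, Polynomial.coeff_mul_C, Polynomial.eval_mul, Polynomial.eval_C,
      Polynomial.eval_pow, Polynomial.eval_X]
  rw [hfun, Polynomial.deriv, ← Polynomial.coeff_zero_eq_eval_zero, Polynomial.coeff_derivative]
  simp only [Nat.cast_zero, zero_add, mul_one]
  rw [hq, Polynomial.finset_sum_coeff]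
  rw [Finset.sum_eq_single 1]
  · rw [Polynomial.coeff_C_mul, Polynomial.coeff_X_pow, if_pos rfl, mul_one, hD1,
      Polynomial.coeff_neg]
  · intro j _ hj
    rw [Polynomial.coeff_C_mul, Polynomial.coeff_X_pow, if_neg (by omega), mul_zero]
  · intro h
    exact absurd (Finset.mem_range.mpr (by omega)) h

end Main

section Rec
variable {m : ℕ}

lemma trace_transfer (U : Matrix (Fin m) (Fin m) (Polynomial ℂ))
    (B : Matrix (Fin m) (Fin m) ℂ) (k : ℕ) :
    ((U * B.map Polynomial.C).trace).coeff k = (((matPolyEquiv U).coeff k) * B).trace := by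
  simp only [Matrix.trace, Matrix.diag_apply, Polynomial.finset_sum_coeff, Matrix.mul_apply,
    Matrix.map_apply, Polynomial.coeff_mul_C, matPolyEquiv_coeff_apply]

/-- The fundamental identity for `P := matPolyEquiv (adjugate (charmatrix A))`. -/
lemma adj_charmatrix_mul (A : Matrix (Fin m) (Fin m) ℂ) :
    matPolyEquiv (Matrix.adjugate (charmatrix A)) * (X - Polynomial.C A)
      = (A.charpoly).map (algebraMap ℂ (Matrix (Fin m) (Fin m) ℂ)) := by
  have h : Matrix.adjugate (charmatrix A) * charmatrix A
      = A.charpoly • (1 : Matrix (Fin m) (Fin m) (Polynomial ℂ)) := Matrix.adjugate_mul _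
  apply_fun matPolyEquiv at h
  rwa [_root_.map_mul, matPolyEquiv_charmatrix, matPolyEquiv_smul_one] at h

lemma adj_coeff_rec (A : Matrix (Fin m) (Fin m) ℂ) (k : ℕ) :
    (matPolyEquiv (Matrix.adjugate (charmatrix A))).coeff k
      - (matPolyEquiv (Matrix.adjugate (charmatrix A))).coeff (k + 1) * A
      = (A.charpoly.coeff (k + 1)) • (1 : Matrix (Fin m) (Fin m) ℂ) := by
  have h := adj_charmatrix_mul A
  have := congrArg (fun p => p.coeff (k + 1)) h
  simp only [mul_sub, Polynomial.coeff_sub, Polynomial.coeff_mul_X, Polynomial.coeff_mul_C,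
    Polynomial.coeff_map] at this
  rw [Algebra.algebraMap_eq_smul_one] at this
  exact this

lemma adj_coeff_zero_of_ge (A : Matrix (Fin m) (Fin m) ℂ) (k : ℕ) (hk : m ≤ k) :
    (matPolyEquiv (Matrix.adjugate (charmatrix A))).coeff k = 0 := by
  set P := matPolyEquiv (Matrix.adjugate (charmatrix A)) with hP
  have hdeg : A.charpoly.natDegree = m := by
    rw [Matrix.charpoly_natDegree_eq_dim, Fintype.card_fin]
  have hrec : ∀ l, m ≤ l → P.coeff l = P.coeff (l + 1) * A := by
    intro l hl
    have h := adj_coeff_rec A l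
    rw [show A.charpoly.coeff (l + 1) = 0 from
      Polynomial.coeff_eq_zero_of_natDegree_lt (by omega), zero_smul, sub_eq_zero] at h
    exact h
  have key : ∀ d l, m ≤ l → P.coeff l = P.coeff (l + d) * A ^ d := by
    intro d
    induction d with
    | zero => intro l _; simp
    | succ d ih =>
      intro l hl
      rw [hrec l hl, ih (l + 1) (by omega)]
      rw [mul_assoc, ← pow_succ]
      congr 2
      omega
  rw [key (P.natDegree + 1) k hk, Polynomial.coeff_eq_zero_of_natDegree_lt (by omega), zero_mul]

set_option maxHeartbeats 1000000 in
lemma adj_coeff_formula (A : Matrix (Fin m) (Fin m) ℂ) (j : ℕ) (hj : j < m) :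
    (matPolyEquiv (Matrix.adjugate (charmatrix A))).coeff (m - 1 - j)
      = A ^ j + ∑ i ∈ Finset.range j, (A.charpoly.coeff (m - j + i)) • A ^ i := by
  set P := matPolyEquiv (Matrix.adjugate (charmatrix A)) with hP
  have hmono : A.charpoly.Monic := Matrix.charpoly_monic A
  have hdeg : A.charpoly.natDegree = m := by
    rw [Matrix.charpoly_natDegree_eq_dim, Fintype.card_fin]
  induction j with
  | zero =>
    have h := adj_coeff_rec A (m - 1)
    rw [show m - 1 + 1 = m by omega] at h
    rw [adj_coeff_zero_of_ge A m le_rfl, zero_mul, sub_zero] at h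
    have hc : A.charpoly.coeff m = 1 := by
      have h2 := hmono.coeff_natDegree
      rwa [hdeg] at h2
    rw [hc] at h
    simpa using h
  | succ j ih =>
    have hj' : j < m := by omega
    have hrec := adj_coeff_rec A (m - 1 - (j + 1))
    rw [show m - 1 - (j + 1) + 1 = m - 1 - j by omega] at hrec
    rw [ih hj'] at hrec
    calc P.coeff (m - 1 - (j + 1))
        = (A ^ j + ∑ i ∈ Finset.range j, A.charpoly.coeff (m - j + i) • A ^ i) * A
          + A.charpoly.coeff (m - 1 - j) • 1 := by
          rw [sub_eq_iff_eq_add.mp hrec, add_comm]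
      _ = A ^ (j + 1) + (∑ i ∈ Finset.range j,
            A.charpoly.coeff (m - (j + 1) + (i + 1)) • A ^ (i + 1)
          + A.charpoly.coeff (m - (j + 1) + 0) • A ^ 0) := by
          rw [add_mul, Finset.sum_mul, ← pow_succ, add_assoc]
          congr 1
          congr 1
          · refine Finset.sum_congr rfl fun i _ => ?_
            rw [smul_mul_assoc, ← pow_succ, show m - j + i = m - (j + 1) + (i + 1) by omega]
          · rw [pow_zero, show m - 1 - j = m - (j + 1) + 0 by omega]
      _ = A ^ (j + 1) + ∑ i ∈ Finset.range (j + 1),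
            A.charpoly.coeff (m - (j + 1) + i) • A ^ i := by
          rw [Finset.sum_range_succ']

end Rec

section Equiv
variable {m : ℕ}

lemma trace_equiv (A B : Matrix (Fin m) (Fin m) ℂ) :
    (∀ k < m, (((matPolyEquiv (Matrix.adjugate (charmatrix A))).coeff k) * B).trace = 0)
      ↔ ∀ j < m, (A ^ j * B).trace = 0 := by
  have formula : ∀ j < m,
      (((matPolyEquiv (Matrix.adjugate (charmatrix A))).coeff (m - 1 - j)) * B).trace
        = (A ^ j * B).trace
          + ∑ i ∈ Finset.range j, A.charpoly.coeff (m - j + i) * (A ^ i * B).trace := by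
    intro j hj
    rw [adj_coeff_formula A j hj, add_mul, Matrix.trace_add, Finset.sum_mul, Matrix.trace_sum]
    congr 1
    refine Finset.sum_congr rfl fun i _ => ?_
    rw [smul_mul_assoc, Matrix.trace_smul, smul_eq_mul]
  constructor
  · intro h j
    induction j using Nat.strong_induction_on with
    | _ j ih =>
      intro hj
      have hf := formula j hj
      rw [h (m - 1 - j) (by omega)] at hf
      have hz : ∑ i ∈ Finset.range j, A.charpoly.coeff (m - j + i) * (A ^ i * B).trace = 0 := by
        refine Finset.sum_eq_zero fun i hi => ?_
        have hij := Finset.mem_range.mp hi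
        rw [ih i hij (by omega), mul_zero]
      rw [hz, add_zero] at hf
      exact hf.symm
  · intro h k hk
    have hjm : m - 1 - k < m := by omega
    have hkk : m - 1 - (m - 1 - k) = k := by omega
    have hf := formula (m - 1 - k) hjm
    rw [hkk] at hf
    rw [hf, h _ hjm, zero_add]
    refine Finset.sum_eq_zero fun i hi => ?_
    have hij := Finset.mem_range.mp hi
    rw [h i (by omega), mul_zero]

lemma traces_of_comm (A B Xm : Matrix (Fin m) (Fin m) ℂ) (hX : Xm * A - A * Xm = B) :
    ∀ j, (A ^ j * B).trace = 0 := by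
  intro j
  rw [← hX, Matrix.mul_sub, Matrix.trace_sub]
  rw [show A ^ j * (Xm * A) = (A ^ j * Xm) * A from (mul_assoc _ _ _).symm]
  rw [Matrix.trace_mul_comm (A ^ j * Xm) A]
  rw [show A * (A ^ j * Xm) = (A * A ^ j) * Xm from (mul_assoc _ _ _).symm]
  rw [show A ^ j * (A * Xm) = (A ^ j * A) * Xm from (mul_assoc _ _ _).symm]
  rw [← pow_succ', ← pow_succ, sub_self]

end Equiv

section Diag
variable {m : ℕ}

lemma exists_comm_of_traces (A B : Matrix (Fin m) (Fin m) ℂ)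
    (hroots : ∃ f : Fin m → ℂ, Function.Injective f ∧
      A.charpoly = ∏ i, (X - Polynomial.C (f i)))
    (h : ∀ j < m, (A ^ j * B).trace = 0) :
    ∃ Xm : Matrix (Fin m) (Fin m) ℂ, Xm * A - A * Xm = B := by
  rcases Nat.eq_zero_or_pos m with hm | hm
  · subst hm
    exact ⟨0, Subsingleton.elim _ _⟩
  obtain ⟨f, hinj, hcp⟩ := hroots
  -- eigenvectors
  have hev : ∀ i : Fin m, ∃ v : Fin m → ℂ, v ≠ 0 ∧ A.mulVec v = f i • v := by
    intro i
    have h1 : A.charpoly.eval (f i) = 0 := by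
      rw [hcp, Polynomial.eval_prod]
      apply Finset.prod_eq_zero (Finset.mem_univ i)
      simp
    have h2 : A.charpoly.eval (f i)
        = (f i • (1 : Matrix (Fin m) (Fin m) ℂ) - A).det := by
      rw [Matrix.charpoly, ← Polynomial.coe_evalRingHom, RingHom.map_det]
      congr 1
      ext a b
      by_cases hab : a = b
      · subst hab
        simp [charmatrix_apply_eq, Matrix.one_apply]
      · simp [charmatrix_apply_ne _ _ _ hab, Matrix.one_apply_ne hab]
    rw [h2] at h1
    obtain ⟨v, hv0, hv⟩ := Matrix.exists_mulVec_eq_zero_iff.mpr h1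
    refine ⟨v, hv0, ?_⟩
    rw [Matrix.sub_mulVec, sub_eq_zero] at hv
    rw [← hv, Matrix.smul_mulVec, Matrix.one_mulVec]
  choose v hv0 hvA using hev
  -- eigenvectors are independent, hence a basis
  have hEig : ∀ i, Module.End.HasEigenvector (Matrix.mulVecLin A) (f i) (v i) := by
    intro i
    refine ⟨Module.End.mem_eigenspace_iff.mpr ?_, hv0 i⟩
    rw [Matrix.mulVecLin_apply, hvA i]
  have lin_ind : LinearIndependent ℂ v :=
    Module.End.eigenvectors_linearIndependent' (Matrix.mulVecLin A) f hinj v hEig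
  haveI : Nonempty (Fin m) := ⟨⟨0, hm⟩⟩
  let b : Module.Basis (Fin m) ℂ (Fin m → ℂ) := basisOfLinearIndependentOfCardEqFinrank lin_ind
    (by simp)
  have hb : ⇑b = v := coe_basisOfLinearIndependentOfCardEqFinrank _ _
  set S : Matrix (Fin m) (Fin m) ℂ := (Pi.basisFun ℂ (Fin m)).toMatrix ⇑b with hS
  haveI : Invertible S := (Pi.basisFun ℂ (Fin m)).invertibleToMatrix b
  have hSapp : ∀ i j, S i j = v j i := by
    intro i j
    rw [hS, Module.Basis.toMatrix_apply, Pi.basisFun_repr, hb]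
  set D : Matrix (Fin m) (Fin m) ℂ := Matrix.diagonal f with hD
  have hAS : A * S = S * D := by
    ext i j
    rw [Matrix.mul_apply, hD, Matrix.mul_diagonal, hSapp i j]
    have hcol : ∑ k, A i k * S k j = A.mulVec (v j) i := by
      rw [Matrix.mulVec, dotProduct]
      exact Finset.sum_congr rfl fun k _ => by rw [hSapp k j]
    rw [hcol, hvA j, Pi.smul_apply, smul_eq_mul, mul_comm]
  have hA' : A = S * D * ⅟S := by
    rw [← hAS, mul_assoc, mul_invOf_self, mul_one]
  have hpow : ∀ j : ℕ, A ^ j = S * D ^ j * ⅟S := by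
    intro j
    induction j with
    | zero => simp
    | succ j ih =>
      rw [pow_succ, ih, hA', pow_succ]
      simp only [mul_assoc, invOf_mul_cancel_left]
  set B' : Matrix (Fin m) (Fin m) ℂ := ⅟S * B * S with hB'
  have htr : ∀ j < m, ∑ i, f i ^ j * B' i i = 0 := by
    intro j hj
    have h1 : (A ^ j * B).trace = (D ^ j * B').trace := by
      rw [hpow j, hB']
      have e : S * D ^ j * ⅟S * B = S * (D ^ j * ⅟S * B) := by simp only [mul_assoc]
      have e2 : D ^ j * (⅟S * B * S) = D ^ j * ⅟S * B * S := by simp only [mul_assoc]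
      rw [e, Matrix.trace_mul_comm S (D ^ j * ⅟S * B), e2]
    have h3 : (D ^ j * B').trace = ∑ i, f i ^ j * B' i i := by
      rw [hD, Matrix.diagonal_pow, Matrix.trace]
      refine Finset.sum_congr rfl fun i _ => ?_
      rw [Matrix.diag_apply, Matrix.diagonal_mul, Pi.pow_apply]
    rw [← h3, ← h1]
    exact h j hj
  -- Vandermonde argument: the diagonal of B' vanishes
  have hWdet : ((Matrix.vandermonde f)ᵀ).det ≠ 0 := by
    rw [Matrix.det_transpose, Matrix.det_vandermonde]
    refine Finset.prod_ne_zero_iff.mpr fun i _ => ?_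
    refine Finset.prod_ne_zero_iff.mpr fun j hj => ?_
    have hij : i ≠ j := ne_of_lt (Finset.mem_Ioi.mp hj)
    exact sub_ne_zero.mpr fun hEq => hij (hinj hEq).symm
  haveI : Invertible ((Matrix.vandermonde f)ᵀ) :=
    Matrix.invertibleOfIsUnitDet _ (isUnit_iff_ne_zero.mpr hWdet)
  have hmv : (Matrix.vandermonde f)ᵀ.mulVec (fun i => B' i i) = 0 := by
    funext j
    simp only [Matrix.mulVec, dotProduct, Matrix.transpose_apply, Matrix.vandermonde_apply,
      Pi.zero_apply]
    exact htr (j : ℕ) j.isLt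
  have hdzero : ∀ i, B' i i = 0 := by
    have hfun : (fun i => B' i i) = 0 := by
      have h4 : (⅟((Matrix.vandermonde f)ᵀ)).mulVec
          (((Matrix.vandermonde f)ᵀ).mulVec (fun i => B' i i)) = (fun i => B' i i) := by
        rw [Matrix.mulVec_mulVec, invOf_mul_self, Matrix.one_mulVec]
      rw [← h4, hmv, Matrix.mulVec_zero]
    exact fun i => congrFun hfun i
  set X' : Matrix (Fin m) (Fin m) ℂ :=
    Matrix.of (fun i j => if i = j then 0 else B' i j / (f j - f i)) with hX'
  have hcomm : X' * D - D * X' = B' := by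
    ext i j
    rw [Matrix.sub_apply, hD, Matrix.mul_diagonal, Matrix.diagonal_mul, hX']
    simp only [Matrix.of_apply]
    by_cases hab : i = j
    · subst hab
      simp [hdzero i]
    · rw [if_neg hab]
      have hne : f j - f i ≠ 0 := sub_ne_zero.mpr fun hEq => hab (hinj hEq).symm
      field_simp
  refine ⟨S * X' * ⅟S, ?_⟩
  have e1 : (S * X' * ⅟S) * A = S * (X' * D) * ⅟S := by
    rw [hA']; simp only [mul_assoc, invOf_mul_cancel_left]
  have e2 : A * (S * X' * ⅟S) = S * (D * X') * ⅟S := by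
    rw [hA']; simp only [mul_assoc, invOf_mul_cancel_left]
  rw [e1, e2, ← sub_mul, ← mul_sub, hcomm, hB']
  simp only [mul_assoc, invOf_mul_cancel_left, mul_invOf_cancel_left, mul_invOf_self, mul_one]

end Diag

lemma main_iff (m : ℕ) (A B : Matrix (Fin m) (Fin m) ℂ)
    (hroots : ∃ f : Fin m → ℂ, Function.Injective f ∧
      A.charpoly = ∏ i, (X - Polynomial.C (f i))) :
    (∀ k < m, deriv (fun t : ℂ => ((A + t • B).charpoly).coeff k) 0 = 0)
      ↔ ∃ Xm : Matrix (Fin m) (Fin m) ℂ, Xm * A - A * Xm = B := by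
  have h1 : ∀ k : ℕ, deriv (fun t : ℂ => ((A + t • B).charpoly).coeff k) 0
      = -(((matPolyEquiv (Matrix.adjugate (charmatrix A))).coeff k) * B).trace := by
    intro k
    rw [deriv_coeff, trace_transfer]
  constructor
  · intro h
    refine exists_comm_of_traces A B hroots ((trace_equiv A B).mp ?_)
    intro k hk
    have hh := h k hk
    rw [h1 k, neg_eq_zero] at hh
    exact hh
  · rintro ⟨Xm, hXm⟩ k hk
    rw [h1 k, (trace_equiv A B).mpr (fun j _ => traces_of_comm A B Xm hXm j) k hk, neg_zero]

/-- **kernel of the differential.** For `A ∈ Θ_G` whose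
characteristic polynomial has `n` distinct roots and such that the
characteristic polynomial of `A₁` has `n-1` distinct roots, a matrix
`C ∈ Θ_G` kills all directional derivatives of the coefficients of the double
characteristic polynomial map at `A` if and only if `C = [X, A]` for some `X`
and `C₁ = [Y, A₁]` for some `Y`. -/
theorem kernel_of_differential (n : ℕ) (hn : 2 ≤ n)
    (E : Fin n → Fin n → Prop) (hirr : ∀ v, ¬ E v v)
    (A : Matrix (Fin n) (Fin n) ℂ) (hA : A ∈ Theta E)
    (hroots : ∃ f : Fin n → ℂ, Function.Injective f ∧
      A.charpoly = ∏ i, (X - Polynomial.C (f i)))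
    (hroots1 : ∃ f : Fin (n - 1) → ℂ, Function.Injective f ∧
      (A.submatrix (finEmb n) (finEmb n)).charpoly
        = ∏ i, (X - Polynomial.C (f i)))
    (C : Matrix (Fin n) (Fin n) ℂ) (hC : C ∈ Theta E) :
    ((∀ k < n, deriv (fun t : ℂ => ((A + t • C).charpoly).coeff k) 0 = 0) ∧
      (∀ k < n - 1, deriv (fun t : ℂ =>
        (((A + t • C).submatrix (finEmb n) (finEmb n)).charpoly).coeff k) 0
          = 0))
    ↔
    ((∃ X : Matrix (Fin n) (Fin n) ℂ, X * A - A * X = C) ∧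
      (∃ Y : Matrix (Fin (n - 1)) (Fin (n - 1)) ℂ,
        Y * (A.submatrix (finEmb n) (finEmb n))
          - (A.submatrix (finEmb n) (finEmb n)) * Y
          = C.submatrix (finEmb n) (finEmb n))) := by
  have hsub : ∀ t : ℂ, (A + t • C).submatrix (finEmb n) (finEmb n)
      = A.submatrix (finEmb n) (finEmb n) + t • C.submatrix (finEmb n) (finEmb n) := by
    intro t
    ext i j
    simp [Matrix.submatrix_apply, Matrix.add_apply, Matrix.smul_apply]
  have h1 := main_iff n A C hroots
  have h2 := main_iff (n - 1) (A.submatrix (finEmb n) (finEmb n))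
    (C.submatrix (finEmb n) (finEmb n)) hroots1
  constructor
  · rintro ⟨ha, hb⟩
    simp only [hsub] at hb
    exact ⟨h1.mp ha, h2.mp hb⟩
  · rintro ⟨ha, hb⟩
    refine ⟨h1.mpr ha, ?_⟩
    simp only [hsub]
    exact h2.mpr hb
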